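/- arXiv:2007.07492 — 4 statements merged into one kernel-verified Lean document; each statement's English description precedes it below -/
import Mathlib

section
/- Let Γ be a closed d-ADR set in ℝⁿ with d < n-1. Then there exists c ∈ (0,1), depending only on n, d, and the ADR constant C_d, such that for every x ∈ Γ and r > 0 there exists a point X ∈ ℝⁿ \ Γ with B(X, cr) ⊂ B(x,r) \ Γ. (Existence of interior Corkscrew points.) -/
open Metric MeasureTheory Set
open scoped ENNReal NNReal

/-- Existence of interior Corkscrew points for a closed `d`-ADR set `Γ ⊂ ℝⁿ` with `d < n-1`:
there is `c ∈ (0,1)` so that every surface ball `Δ(x,r)` admits a Corkscrew point `X` with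
`B(X, cr) ⊆ B(x,r) \ Γ`. -/
theorem adr_corkscrew_points {n : ℕ} (Γ : Set (EuclideanSpace ℝ (Fin n)))
    (hΓ : IsClosed Γ) (hne : Γ.Nonempty) (d Cd : ℝ) (hd : 0 < d) (hdn : d < (n : ℝ) - 1)
    (hCd : 1 ≤ Cd)
    (hADR : ∀ x ∈ Γ, ∀ r : ℝ, 0 < r →
      ENNReal.ofReal (Cd⁻¹ * r ^ d) ≤ μH[d] (Γ ∩ ball x r) ∧
      μH[d] (Γ ∩ ball x r) ≤ ENNReal.ofReal (Cd * r ^ d)) :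
    ∃ c : ℝ, 0 < c ∧ c < 1 ∧ ∀ x ∈ Γ, ∀ r : ℝ, 0 < r →
      ∃ X : EuclideanSpace ℝ (Fin n), ball X (c * r) ⊆ ball x r \ Γ := by
  classical
  have hCd0 : (0:ℝ) < Cd := lt_of_lt_of_le one_pos hCd
  have hnd : 0 < (n:ℝ) - d := by linarith
  -- the key constants
  set A : ℝ := Cd ^ 2 * 2 ^ d * 4 ^ n with hA_def
  have hA : 0 < A := by positivity
  set K : ℝ := (1/2 : ℝ) ^ n / (2 * A) with hK_def
  have hK : 0 < K := by positivity
  set c : ℝ := min (1/2) (K ^ ((n:ℝ) - d)⁻¹) with hc_def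
  have hc : 0 < c := lt_min (by norm_num) (Real.rpow_pos_of_pos hK _)
  have hchalf : c ≤ 1/2 := min_le_left _ _
  have htK : c ^ ((n:ℝ) - d) ≤ K := by
    calc c ^ ((n:ℝ) - d) ≤ (K ^ ((n:ℝ) - d)⁻¹) ^ ((n:ℝ) - d) :=
          Real.rpow_le_rpow hc.le (min_le_right _ _) hnd.le
      _ = K := Real.rpow_inv_rpow hK.le hnd.ne'
  clear_value A K c
  refine ⟨c, hc, lt_of_le_of_lt hchalf (by norm_num), ?_⟩
  intro x hx r hr
  by_contra hcon
  push_neg at hcon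
  have hcr : 0 < c * r := mul_pos hc hr
  -- every point of B(x, r/2) is within c*r of Γ
  have hnear : ∀ Y : EuclideanSpace ℝ (Fin n), Y ∈ ball x (r/2) → ∃ z ∈ Γ, dist Y z < c * r := by
    intro Y hY
    by_contra h
    push_neg at h
    refine hcon Y (fun w hw => ?_)
    rw [mem_ball] at hw hY
    constructor
    · rw [mem_ball]
      have : c * r ≤ r / 2 := by nlinarith
      calc dist w x ≤ dist w Y + dist Y x := dist_triangle _ _ _
        _ < c * r + r / 2 := by linarith
        _ ≤ r := by linarith
    · intro hwΓ
      have := h w hwΓ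
      rw [dist_comm] at this
      linarith
  -- a finite c*r-net of the compact set S = Γ ∩ closedBall x r
  set S : Set (EuclideanSpace ℝ (Fin n)) := Γ ∩ closedBall x r with hS_def
  have hScompact : IsCompact S := (isCompact_closedBall x r).inter_left hΓ
  obtain ⟨t, htS, htfin, hcover⟩ :=
    finite_approx_of_totallyBounded hScompact.totallyBounded (c * r) hcr
  set T : Finset (EuclideanSpace ℝ (Fin n)) := htfin.toFinset with hT_def
  -- a maximal (2cr)-separated subset u of T
  set P : Finset (EuclideanSpace ℝ (Fin n)) → Prop := fun v => ∀ a ∈ v, ∀ b ∈ v, a ≠ b → 2 * (c * r) ≤ dist a b with hP_def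
  set F : Finset (Finset (EuclideanSpace ℝ (Fin n))) := T.powerset.filter P with hF_def
  have hFne : F.Nonempty :=
    ⟨∅, Finset.mem_filter.mpr ⟨Finset.empty_mem_powerset _,
      fun a ha => absurd ha (Finset.notMem_empty a)⟩⟩
  obtain ⟨u, huF, humax⟩ := Finset.exists_max_image F (fun v => v.card) hFne
  have huT : u ⊆ T := Finset.mem_powerset.mp (Finset.mem_filter.mp huF).1
  have husep : ∀ a ∈ u, ∀ b ∈ u, a ≠ b → 2 * (c * r) ≤ dist a b :=
    (Finset.mem_filter.mp huF).2
  have huS : ∀ a ∈ u, a ∈ S := fun a ha => htS (htfin.mem_toFinset.mp (huT ha))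
  -- maximality: every point of T is within 2cr of u
  have hnet : ∀ y ∈ T, ∃ a ∈ u, dist y a < 2 * (c * r) := by
    intro y hy
    by_contra h
    push_neg at h
    have hyu : y ∉ u := by
      intro hyu
      have := h y hyu
      rw [dist_self] at this
      nlinarith
    have hins : insert y u ∈ F := by
      rw [hF_def, Finset.mem_filter, Finset.mem_powerset]
      refine ⟨Finset.insert_subset hy huT, ?_⟩
      intro a ha b hb hab
      rcases Finset.mem_insert.mp ha with ha' | ha'
      · rcases Finset.mem_insert.mp hb with hb' | hb'
        · exact absurd (ha'.trans hb'.symm) hab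
        · rw [ha']; exact h b hb'
      · rcases Finset.mem_insert.mp hb with hb' | hb'
        · rw [hb', dist_comm]; exact h a ha'
        · exact husep a ha' b hb' hab
    have := humax _ hins
    rw [Finset.card_insert_of_notMem hyu] at this
    omega
  -- counting: card u is controlled via the d-dimensional Hausdorff measure
  set k : ℝ := (u.card : ℝ) with hk_def
  have hk0 : 0 ≤ k := Nat.cast_nonneg _
  clear_value k
  have H1 : k * (c * r) ^ d ≤ Cd ^ 2 * (2 * r) ^ d := by
    have hdisj : (↑u : Set (EuclideanSpace ℝ (Fin n))).Pairwise (Function.onFun Disjoint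
        fun a => Γ ∩ ball a (c * r)) := by
      intro a ha b hb hab
      have := husep a (by exact_mod_cast ha) b (by exact_mod_cast hb) hab
      exact Disjoint.mono inter_subset_right inter_subset_right
        (ball_disjoint_ball (by linarith))
    have hmeas : ∀ b ∈ u, MeasurableSet (Γ ∩ ball b (c * r)) :=
      fun b _ => hΓ.measurableSet.inter measurableSet_ball
    have hsum : ∑ a ∈ u, μH[d] (Γ ∩ ball a (c * r))
        = μH[d] (⋃ a ∈ u, Γ ∩ ball a (c * r)) :=
      (measure_biUnion_finset hdisj hmeas).symm
    have hsub : (⋃ a ∈ u, Γ ∩ ball a (c * r)) ⊆ Γ ∩ ball x (2 * r) := by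
      intro w hw
      rw [mem_iUnion₂] at hw
      obtain ⟨a, ha, hwΓ, hwa⟩ := hw
      refine ⟨hwΓ, ?_⟩
      rw [mem_ball] at hwa ⊢
      have hax : dist a x ≤ r := (huS a ha).2
      calc dist w x ≤ dist w a + dist a x := dist_triangle _ _ _
        _ < c * r + r := by linarith
        _ ≤ 2 * r := by nlinarith
    have hupper : ∑ a ∈ u, μH[d] (Γ ∩ ball a (c * r))
        ≤ ENNReal.ofReal (Cd * (2 * r) ^ d) := by
      rw [hsum]
      exact le_trans (measure_mono hsub) (hADR x hx (2 * r) (by linarith)).2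
    have hlower : (u.card : ℝ≥0∞) * ENNReal.ofReal (Cd⁻¹ * (c * r) ^ d)
        ≤ ∑ a ∈ u, μH[d] (Γ ∩ ball a (c * r)) := by
      have := Finset.card_nsmul_le_sum u (fun a => μH[d] (Γ ∩ ball a (c * r)))
        (ENNReal.ofReal (Cd⁻¹ * (c * r) ^ d))
        (fun a ha => (hADR a (huS a ha).1 (c * r) hcr).1)
      rwa [nsmul_eq_mul] at this
    have hEN : ENNReal.ofReal (k * (Cd⁻¹ * (c * r) ^ d))
        ≤ ENNReal.ofReal (Cd * (2 * r) ^ d) := by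
      rw [ENNReal.ofReal_mul hk0, hk_def, ENNReal.ofReal_natCast]
      exact le_trans hlower hupper
    have hreal : k * (Cd⁻¹ * (c * r) ^ d) ≤ Cd * (2 * r) ^ d := by
      have h2 : (0:ℝ) ≤ Cd * (2 * r) ^ d := by positivity
      exact (ENNReal.ofReal_le_ofReal_iff h2).mp hEN
    have hCdinv : Cd * Cd⁻¹ = 1 := mul_inv_cancel₀ hCd0.ne'
    have := mul_le_mul_of_nonneg_left hreal hCd0.le
    calc k * (c * r) ^ d = Cd * Cd⁻¹ * (k * (c * r) ^ d) := by rw [hCdinv]; ring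
      _ = Cd * (k * (Cd⁻¹ * (c * r) ^ d)) := by ring
      _ ≤ Cd * (Cd * (2 * r) ^ d) := this
      _ = Cd ^ 2 * (2 * r) ^ d := by ring
  -- volume: B(x, r/2) is covered by the balls B(a, 4cr), a ∈ u
  have H2 : (r / 2) ^ n ≤ k * (4 * (c * r)) ^ n := by
    have hcover2 : ball x (r/2) ⊆ ⋃ a ∈ u, ball a (4 * (c * r)) := by
      intro Y hY
      obtain ⟨z, hzΓ, hYz⟩ := hnear Y hY
      have hzs : z ∈ S := by
        refine ⟨hzΓ, ?_⟩
        rw [mem_closedBall]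
        rw [mem_ball] at hY
        have : c * r ≤ r / 2 := by nlinarith
        calc dist z x ≤ dist z Y + dist Y x := dist_triangle _ _ _
          _ ≤ c * r + r / 2 := by rw [dist_comm] at hYz; linarith
          _ ≤ r := by linarith
      obtain ⟨y, hyt, hzy⟩ := mem_iUnion₂.mp (hcover hzs)
      rw [mem_ball] at hzy
      obtain ⟨a, hau, hya⟩ := hnet y (htfin.mem_toFinset.mpr hyt)
      rw [mem_iUnion₂]
      refine ⟨a, hau, ?_⟩
      rw [mem_ball]
      calc dist Y a ≤ dist Y z + dist z y + dist y a := dist_triangle4 _ _ _ _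
        _ < c * r + c * r + 2 * (c * r) := by linarith
        _ = 4 * (c * r) := by ring
    set V : ℝ≥0∞ := volume (ball (0 : EuclideanSpace ℝ (Fin n)) 1) with hV_def
    have hV0 : V ≠ 0 := (measure_ball_pos _ _ one_pos).ne'
    have hVtop : V ≠ ⊤ := measure_ball_lt_top.ne
    have hballvol : ∀ a : EuclideanSpace ℝ (Fin n), ∀ ρ : ℝ, 0 < ρ →
        volume (ball a ρ) = ENNReal.ofReal (ρ ^ n) * V := by
      intro a ρ hρ
      rw [Measure.addHaar_ball_of_pos volume a hρ, finrank_euclideanSpace_fin]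
    have hmain : ENNReal.ofReal ((r/2) ^ n) * V
        ≤ ENNReal.ofReal (k * (4 * (c * r)) ^ n) * V := by
      calc ENNReal.ofReal ((r/2) ^ n) * V = volume (ball x (r/2)) :=
            (hballvol x (r/2) (by linarith)).symm
        _ ≤ volume (⋃ a ∈ u, ball a (4 * (c * r))) := measure_mono hcover2
        _ ≤ ∑ a ∈ u, volume (ball a (4 * (c * r))) := measure_biUnion_finset_le _ _
        _ = ∑ _a ∈ u, ENNReal.ofReal ((4 * (c * r)) ^ n) * V := by
            refine Finset.sum_congr rfl fun a _ => ?_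
            exact hballvol a _ (by linarith)
        _ = (u.card : ℝ≥0∞) * (ENNReal.ofReal ((4 * (c * r)) ^ n) * V) := by
            rw [Finset.sum_const, nsmul_eq_mul]
        _ = ENNReal.ofReal (k * (4 * (c * r)) ^ n) * V := by
            rw [ENNReal.ofReal_mul hk0, hk_def, ENNReal.ofReal_natCast, mul_assoc]
    have hof : ENNReal.ofReal ((r/2) ^ n) ≤ ENNReal.ofReal (k * (4 * (c * r)) ^ n) :=
      (ENNReal.mul_le_mul_iff_left hV0 hVtop).mp hmain
    exact (ENNReal.ofReal_le_ofReal_iff (by positivity)).mp hof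
  -- combine and contradict the choice of c
  set tt : ℝ := c ^ ((n:ℝ) - d) with htt_def
  have htt0 : 0 < tt := Real.rpow_pos_of_pos hc _
  have hcn : (c:ℝ) ^ n = c ^ d * tt := by
    rw [htt_def, ← Real.rpow_add hc, ← Real.rpow_natCast c n]
    congr 1
    ring
  have htK2 : tt ≤ K := htt_def ▸ htK
  clear_value tt
  have e1 : ((c * r) : ℝ) ^ d = c ^ d * r ^ d := Real.mul_rpow hc.le hr.le
  have e2 : ((2 * r) : ℝ) ^ d = 2 ^ d * r ^ d := Real.mul_rpow (by norm_num) hr.le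
  have H1' : k * (c ^ d * r ^ d) ≤ Cd ^ 2 * (2 ^ d * r ^ d) := by
    rw [← e1, ← e2]; exact H1
  have H2' : (1/2 : ℝ) ^ n * r ^ n ≤ k * (4 ^ n * (c ^ n * r ^ n)) := by
    calc (1/2 : ℝ) ^ n * r ^ n = ((1/2) * r) ^ n := (mul_pow _ _ _).symm
      _ = (r / 2) ^ n := by rw [one_div, inv_mul_eq_div]
      _ ≤ k * (4 * (c * r)) ^ n := H2
      _ = k * (4 ^ n * (c ^ n * r ^ n)) := by rw [mul_pow, mul_pow]
  have hX : (0:ℝ) < c ^ d * r ^ d * r ^ n := by positivity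
  have C3 : (1/2 : ℝ) ^ n * (c ^ d * r ^ d * r ^ n)
      ≤ (A * tt) * (c ^ d * r ^ d * r ^ n) := by
    have C1 : ((1/2 : ℝ) ^ n * r ^ n) * (c ^ d * r ^ d)
        ≤ (k * (4 ^ n * (c ^ n * r ^ n))) * (c ^ d * r ^ d) :=
      mul_le_mul_of_nonneg_right H2' (by positivity)
    have C2 : (k * (c ^ d * r ^ d)) * (4 ^ n * (c ^ n * r ^ n))
        ≤ (Cd ^ 2 * (2 ^ d * r ^ d)) * (4 ^ n * (c ^ n * r ^ n)) :=
      mul_le_mul_of_nonneg_right H1' (by positivity)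
    calc (1/2 : ℝ) ^ n * (c ^ d * r ^ d * r ^ n)
        = ((1/2 : ℝ) ^ n * r ^ n) * (c ^ d * r ^ d) := by ring
      _ ≤ (k * (4 ^ n * (c ^ n * r ^ n))) * (c ^ d * r ^ d) := C1
      _ = (k * (c ^ d * r ^ d)) * (4 ^ n * (c ^ n * r ^ n)) := by ring
      _ ≤ (Cd ^ 2 * (2 ^ d * r ^ d)) * (4 ^ n * (c ^ n * r ^ n)) := C2
      _ = (A * tt) * (c ^ d * r ^ d * r ^ n) := by rw [hcn, hA_def]; ring
  have C4 : (1/2 : ℝ) ^ n ≤ A * tt := le_of_mul_le_mul_right C3 hX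
  have C5 : A * tt ≤ A * K := mul_le_mul_of_nonneg_left htK2 hA.le
  have C6 : A * K = (1/2 : ℝ) ^ n / 2 := by
    rw [hK_def]; field_simp
  have hpowpos : (0:ℝ) < (1/2 : ℝ) ^ n := by positivity
  rw [C6] at C5
  linarith
end

section
/- Let Γ ⊂ ℝⁿ be closed d-ADR with d < n-1. There exists c_H ∈ (0,1) depending only on d, n, and C_d such that: for any Λ ≥ 1, s > 0, and points X₁, X₂ ∈ ℝⁿ\Γ with dist(X_i,Γ) ≥ s and |X₁ - X₂| ≤ Λ s, there exist points Y_i ∈ B(X_i, s/2), i = 1,2, such that the straight line segment [Y₁,Y₂] satisfies dist([Y₁,Y₂], Γ) ≥ c_H Λ^{-d/(n-1-d)} s. (Harnack chain condition.) -/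
open Metric MeasureTheory Set
set_option maxHeartbeats 1000000

open RealInnerProductSpace in
/-- Auxiliary: an orthonormal family of `n-1` vectors orthogonal to a given nonzero vector. -/
lemma adr_aux_onb {n : ℕ} (u : EuclideanSpace ℝ (Fin n)) (hu : u ≠ 0) (hn : 2 ≤ n) :
    ∃ e : Fin (n-1) → EuclideanSpace ℝ (Fin n),
      Orthonormal ℝ e ∧ ∀ i, ⟪e i, u⟫ = 0 := by
  haveI : Fact (Module.finrank ℝ (EuclideanSpace ℝ (Fin n)) = (n-1) + 1) :=
    ⟨by rw [finrank_euclideanSpace_fin]; omega⟩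
  set H := (ℝ ∙ u)ᗮ with hH
  have hfr : Module.finrank ℝ H = n - 1 := Submodule.finrank_orthogonal_span_singleton hu
  let b := stdOrthonormalBasis ℝ H
  let e : Fin (n-1) → EuclideanSpace ℝ (Fin n) := fun i => (b (Fin.cast hfr.symm i) : _)
  refine ⟨e, ?_, ?_⟩
  · have h1 : Orthonormal ℝ (fun i => ((b i : H) : EuclideanSpace ℝ (Fin n))) := by
      have := b.orthonormal.comp_linearIsometry H.subtypeₗᵢ
      exact this
    exact h1.comp _ (Fin.cast_injective _)
  · intro i
    have hm : (b (Fin.cast hfr.symm i) : EuclideanSpace ℝ (Fin n)) ∈ (ℝ ∙ u)ᗮ :=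
      (b (Fin.cast hfr.symm i)).2
    have := (Submodule.mem_orthogonal _ _).mp hm u (Submodule.mem_span_singleton_self u)
    rw [real_inner_comm] at this
    exact this

/-- Auxiliary: existence of a small positive constant. -/
lemma adr_aux_small (β ε δ : ℝ) (hβ : 0 < β) (hε : 0 < ε) (hδ : 0 < δ) :
    ∃ c : ℝ, 0 < c ∧ c ≤ δ ∧ c ^ β ≤ ε := by
  refine ⟨min δ ((min 1 ε) ^ β⁻¹), ?_, min_le_left _ _, ?_⟩
  · have h1 : (0:ℝ) < min 1 ε := lt_min one_pos hε
    exact lt_min hδ (Real.rpow_pos_of_pos h1 β⁻¹)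
  · have h1 : (0:ℝ) < min 1 ε := lt_min one_pos hε
    calc (min δ ((min 1 ε) ^ β⁻¹)) ^ β
        ≤ ((min 1 ε) ^ β⁻¹) ^ β :=
          Real.rpow_le_rpow (le_min hδ.le (Real.rpow_pos_of_pos h1 β⁻¹).le)
            (min_le_right _ _) hβ.le
      _ = min 1 ε := Real.rpow_inv_rpow h1.le hβ.ne'
      _ ≤ ε := min_le_right _ _

open RealInnerProductSpace in
/-- Harnack chain condition for the complement of a closed `d`-ADR set with `d < n-1`:
there is `c_H ∈ (0,1)` such that any two points `X₁, X₂` with `dist(X_i,Γ) ≥ s` and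
`|X₁-X₂| ≤ Λs` can be moved to `Y_i ∈ B(X_i, s/2)` so that the segment `[Y₁,Y₂]` stays at
distance at least `c_H Λ^{-d/(n-1-d)} s` from `Γ`. -/
theorem adr_harnack_chains {n : ℕ} (Γ : Set (EuclideanSpace ℝ (Fin n)))
    (hΓ : IsClosed Γ) (hne : Γ.Nonempty) (d Cd : ℝ) (hd : 0 < d) (hdn : d < (n : ℝ) - 1)
    (hCd : 1 ≤ Cd)
    (hADR : ∀ x ∈ Γ, ∀ r : ℝ, 0 < r →
      ENNReal.ofReal (Cd⁻¹ * r ^ d) ≤ μH[d] (Γ ∩ ball x r) ∧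
      μH[d] (Γ ∩ ball x r) ≤ ENNReal.ofReal (Cd * r ^ d)) :
    ∃ cH : ℝ, 0 < cH ∧ cH < 1 ∧
      ∀ Λ : ℝ, 1 ≤ Λ → ∀ s : ℝ, 0 < s → ∀ X₁ X₂ : EuclideanSpace ℝ (Fin n),
        s ≤ Metric.infDist X₁ Γ → s ≤ Metric.infDist X₂ Γ → dist X₁ X₂ ≤ Λ * s →
        ∃ Y₁ ∈ ball X₁ (s / 2), ∃ Y₂ ∈ ball X₂ (s / 2),
          ∀ Z ∈ segment ℝ Y₁ Y₂,
            cH * Λ ^ (-(d / ((n : ℝ) - 1 - d))) * s ≤ Metric.infDist Z Γ := by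
  have hn2 : 2 ≤ n := by
    have h1 : (1:ℝ) < (n:ℝ) := by linarith
    have : 1 < n := by exact_mod_cast h1
    omega
  set β : ℝ := (n : ℝ) - 1 - d with hβdef
  clear_value β
  have hβ : 0 < β := by simp only [hβdef]; linarith
  have hcastn1 : ((n - 1 : ℕ) : ℝ) = (n : ℝ) - 1 := by
    have : (1:ℕ) ≤ n := by omega
    push_cast [this]; ring
  have hn0 : (0:ℝ) < (n:ℝ) := by exact_mod_cast (by omega : 0 < n)
  -- the big constant
  set E0 : ℝ := (40*(n:ℝ))^(n-1) * Cd^2 * (5:ℝ)^d with hE0def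
  clear_value E0
  have hE0 : 0 < E0 := by
    rw [hE0def]
    have h5 : (0:ℝ) < (5:ℝ)^d := Real.rpow_pos_of_pos (by norm_num) d
    have h40 : (0:ℝ) < 40*(n:ℝ) := by linarith
    positivity
  obtain ⟨cH, hc0, hcδ, hcβ⟩ :=
    adr_aux_small β ((2*E0)⁻¹) (1/(40*(n:ℝ))) hβ (by positivity) (by positivity)
  have hcH1 : cH < 1 := by
    have : 1/(40*(n:ℝ)) < 1 := by
      rw [div_lt_one (by linarith)]
      linarith
    linarith
  refine ⟨cH, hc0, hcH1, ?_⟩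
  intro Λ hΛ s hs X₁ X₂ hdist1 hdist2 h12
  have hΛ0 : (0:ℝ) < Λ := lt_of_lt_of_le one_pos hΛ
  set r : ℝ := cH * Λ ^ (-(d / β)) * s with hrdef
  clear_value r
  have hLpos : (0:ℝ) < Λ ^ (-(d / β)) := Real.rpow_pos_of_pos hΛ0 _
  have hLle1 : Λ ^ (-(d / β)) ≤ 1 := by
    apply Real.rpow_le_one_of_one_le_of_nonpos hΛ
    have h0 : 0 ≤ d / β := le_of_lt (div_pos hd hβ)
    linarith
  have hr0 : 0 < r := by
    rw [hrdef]; positivity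
  have hrs : r ≤ cH * s := by
    rw [hrdef]
    calc cH * Λ ^ (-(d / β)) * s ≤ cH * 1 * s := by
          apply mul_le_mul_of_nonneg_right _ hs.le
          exact mul_le_mul_of_nonneg_left hLle1 hc0.le
      _ = cH * s := by ring
  have hr40 : 40 * (n:ℝ) * r ≤ s := by
    have h1 : 40 * (n:ℝ) * r ≤ 40 * (n:ℝ) * (cH * s) :=
      mul_le_mul_of_nonneg_left hrs (by linarith)
    have h2 : 40 * (n:ℝ) * (cH * s) ≤ 40 * (n:ℝ) * ((1/(40*(n:ℝ))) * s) := by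
      apply mul_le_mul_of_nonneg_left _ (by linarith)
      exact mul_le_mul_of_nonneg_right hcδ hs.le
    have h3 : 40 * (n:ℝ) * ((1/(40*(n:ℝ))) * s) = s := by
      field_simp
    linarith
  have hrs4 : r ≤ s / 4 := by nlinarith
  have hsΛs : s ≤ Λ * s := by nlinarith
  have hrsle : r ≤ s := by linarith
  -- case X₁ = X₂
  by_cases hXX : X₁ = X₂
  · refine ⟨X₁, mem_ball_self (by linarith), X₁, ?_, ?_⟩
    · rw [← hXX]; exact mem_ball_self (by linarith)
    · intro Z hZ
      rw [segment_same] at hZ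
      rw [hZ]
      calc r ≤ s := by linarith
        _ ≤ Metric.infDist X₁ Γ := hdist1
  obtain ⟨x₀, hx₀Γ, hx₀d⟩ := hΓ.exists_infDist_eq_dist hne X₁
  -- far case
  by_cases hfar : 2*(Λ*s) < dist X₁ x₀
  · refine ⟨X₁, mem_ball_self (by linarith), X₂, mem_ball_self (by linarith), ?_⟩
    intro Z hZ
    have hZd : dist X₁ Z ≤ Λ * s := by
      rw [segment_eq_image'] at hZ
      obtain ⟨θ, hθ, rfl⟩ := hZ
      rw [dist_eq_norm]
      have : X₁ - (X₁ + θ • (X₂ - X₁)) = -(θ • (X₂ - X₁)) := by abel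
      rw [this, norm_neg, norm_smul, Real.norm_eq_abs, abs_of_nonneg hθ.1]
      calc θ * ‖X₂ - X₁‖ ≤ 1 * ‖X₂ - X₁‖ :=
            mul_le_mul_of_nonneg_right hθ.2 (norm_nonneg _)
        _ = dist X₁ X₂ := by rw [one_mul, dist_eq_norm, norm_sub_rev]
        _ ≤ Λ * s := h12
    have hZinf : Λ * s ≤ Metric.infDist Z Γ := by
      have := Metric.infDist_le_infDist_add_dist (x := X₁) (y := Z) (s := Γ)
      rw [hx₀d] at this
      have hdd : dist X₁ Z = dist X₁ Z := rfl
      linarith [this, hfar]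
    calc r ≤ s := by linarith
      _ ≤ Λ * s := hsΛs
      _ ≤ Metric.infDist Z Γ := hZinf
  push_neg at hfar
  -- main case
  set u : EuclideanSpace ℝ (Fin n) := X₂ - X₁ with hudef
  clear_value u
  have hu : u ≠ 0 := by rw [hudef]; exact sub_ne_zero.mpr (Ne.symm hXX)
  have hun : ‖u‖ ≤ Λ * s := by
    rw [hudef, ← dist_eq_norm, dist_comm]; exact h12
  obtain ⟨e, heON, heu⟩ := adr_aux_onb u hu hn2
  set K : ℕ := ⌊s / (20 * (n:ℝ) * r)⌋₊ with hKdef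
  have h20 : (0:ℝ) < 20 * (n:ℝ) * r := by positivity
  have hx2 : 2 ≤ s / (20 * (n:ℝ) * r) := by
    rw [le_div_iff₀ h20]; linarith
  have hKx : (K:ℝ) ≤ s / (20 * (n:ℝ) * r) := Nat.floor_le (by positivity)
  have hKlb : s / (40 * (n:ℝ) * r) ≤ (K:ℝ) := by
    have h1 : s / (20 * (n:ℝ) * r) - 1 < (K:ℝ) := Nat.sub_one_lt_floor _
    have h2 : s / (40 * (n:ℝ) * r) = (s / (20 * (n:ℝ) * r))/2 := by
      rw [div_div]; congr 1; ring
    rw [h2]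
    linarith
  clear_value K
  set v : (Fin (n-1) → Fin K) → EuclideanSpace ℝ (Fin n) :=
    fun k => ∑ i, ((5*r) * ((k i : ℕ) : ℝ)) • e i with hvdef
  clear_value v
  have hKpos : (0:ℝ) ≤ (K:ℝ) := Nat.cast_nonneg _
  have hvnorm : ∀ k, ‖v k‖ ≤ s / 4 := by
    intro k
    have hsq : ‖v k‖^2 = ∑ i, ((5*r) * ((k i : ℕ) : ℝ))^2 := by
      rw [hvdef]
      have := heON.inner_sum (fun i => (5*r) * ((k i : ℕ):ℝ))
        (fun i => (5*r) * ((k i : ℕ):ℝ)) Finset.univ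
      rw [← real_inner_self_eq_norm_sq, this]
      simp [sq]
    have hterm : ∀ i, ((5*r) * ((k i : ℕ) : ℝ))^2 ≤ ((5*r)*(K:ℝ))^2 := by
      intro i
      have h1 : ((k i : ℕ) : ℝ) ≤ (K:ℝ) := by exact_mod_cast (k i).2.le
      have h2 : (0:ℝ) ≤ ((k i : ℕ) : ℝ) := Nat.cast_nonneg _
      have haa : ((k i : ℕ):ℝ) * ((k i : ℕ):ℝ) ≤ (K:ℝ)*(K:ℝ) := mul_le_mul h1 h1 h2 hKpos
      calc ((5*r) * ((k i : ℕ) : ℝ))^2 = (5*r)^2 * (((k i : ℕ):ℝ) * ((k i : ℕ):ℝ)) := by ring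
        _ ≤ (5*r)^2 * ((K:ℝ)*(K:ℝ)) := mul_le_mul_of_nonneg_left haa (by positivity)
        _ = ((5*r)*(K:ℝ))^2 := by ring
    have hsum : ∑ i, ((5*r) * ((k i : ℕ):ℝ))^2 ≤ ((n:ℝ)-1) * ((5*r)*(K:ℝ))^2 := by
      calc ∑ i, ((5*r) * ((k i : ℕ):ℝ))^2
          ≤ ∑ _i : Fin (n-1), ((5*r)*(K:ℝ))^2 := Finset.sum_le_sum fun i _ => hterm i
        _ = ((n-1:ℕ):ℝ) * ((5*r)*(K:ℝ))^2 := by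
            rw [Finset.sum_const, Finset.card_univ, Fintype.card_fin, nsmul_eq_mul]
        _ = ((n:ℝ)-1) * ((5*r)*(K:ℝ))^2 := by rw [hcastn1]
    have h54 : 5*r*(K:ℝ)*(n:ℝ) ≤ s/4 := by
      have h1 : 5*r*(n:ℝ)*(K:ℝ) ≤ 5*r*(n:ℝ)*(s/(20*(n:ℝ)*r)) :=
        mul_le_mul_of_nonneg_left hKx (by positivity)
      have h2 : 5*r*(n:ℝ)*(s/(20*(n:ℝ)*r)) = s/4 := by
        field_simp
        ring
      linarith [h1, h2.le]
    have hfin : ‖v k‖^2 ≤ (s/4)^2 := by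
      have h3 : ((n:ℝ)-1) * ((5*r)*(K:ℝ))^2 ≤ (5*r*(K:ℝ)*(n:ℝ))^2 := by
        have hA : (0:ℝ) ≤ ((5*r)*(K:ℝ))^2 := sq_nonneg _
        have hB : ((n:ℝ)-1) ≤ (n:ℝ)*(n:ℝ) := by nlinarith [hn0]
        calc ((n:ℝ)-1) * ((5*r)*(K:ℝ))^2 ≤ ((n:ℝ)*(n:ℝ)) * ((5*r)*(K:ℝ))^2 :=
              mul_le_mul_of_nonneg_right hB hA
          _ = (5*r*(K:ℝ)*(n:ℝ))^2 := by ring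
      have h55 : (5*r*(K:ℝ)*(n:ℝ))^2 ≤ (s/4)^2 := pow_le_pow_left₀ (by positivity) h54 2
      linarith [hsq.le, hsum, h3, h55, hsq.ge]
    calc ‖v k‖ = Real.sqrt (‖v k‖^2) := (Real.sqrt_sq (norm_nonneg _)).symm
      _ ≤ Real.sqrt ((s/4)^2) := Real.sqrt_le_sqrt hfin
      _ = s/4 := Real.sqrt_sq (by positivity)
  have hvsep : ∀ k k', k ≠ k' → 5*r ≤ ‖v k - v k'‖ := by
    intro k k' hkk
    have hdiff : v k - v k' = ∑ i, ((5*r) * ((k i : ℕ):ℝ) - (5*r) * ((k' i : ℕ):ℝ)) • e i := by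
      rw [hvdef, ← Finset.sum_sub_distrib]
      exact Finset.sum_congr rfl fun i _ => (sub_smul _ _ _).symm
    have hsq : ‖v k - v k'‖^2
        = ∑ i, ((5*r) * ((k i:ℕ):ℝ) - (5*r)*((k' i:ℕ):ℝ))^2 := by
      rw [hdiff]
      have := heON.inner_sum (fun i => (5*r) * ((k i : ℕ):ℝ) - (5*r) * ((k' i : ℕ):ℝ))
        (fun i => (5*r) * ((k i : ℕ):ℝ) - (5*r) * ((k' i : ℕ):ℝ)) Finset.univ
      rw [← real_inner_self_eq_norm_sq, this]
      simp [sq]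
    obtain ⟨i₀, hi₀⟩ := Function.ne_iff.mp hkk
    have hne : (k i₀ : ℕ) ≠ (k' i₀ : ℕ) := fun h => hi₀ (Fin.val_injective h)
    have hZ : (1:ℤ) ≤ (((k i₀:ℕ):ℤ) - ((k' i₀:ℕ):ℤ))^2 := by
      have h0 : ((k i₀:ℕ):ℤ) - ((k' i₀:ℕ):ℤ) ≠ 0 := by
        apply sub_ne_zero.mpr
        exact_mod_cast hne
      have h1 := Int.one_le_abs h0
      nlinarith [sq_abs (((k i₀:ℕ):ℤ) - ((k' i₀:ℕ):ℤ))]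
    have hR : (1:ℝ) ≤ (((k i₀:ℕ):ℝ) - ((k' i₀:ℕ):ℝ))^2 := by exact_mod_cast hZ
    have hterm : (5*r)^2 ≤ ((5*r) * ((k i₀:ℕ):ℝ) - (5*r)*((k' i₀:ℕ):ℝ))^2 := by
      have : ((5*r) * ((k i₀:ℕ):ℝ) - (5*r)*((k' i₀:ℕ):ℝ))^2
          = (5*r)^2 * ((((k i₀:ℕ):ℝ) - ((k' i₀:ℕ):ℝ))^2) := by ring
      rw [this]
      nlinarith [hr0.le]
    have hsumge : (5*r)^2 ≤ ∑ i, ((5*r) * ((k i:ℕ):ℝ) - (5*r)*((k' i:ℕ):ℝ))^2 :=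
      le_trans hterm (Finset.single_le_sum
        (f := fun i => ((5*r) * ((k i:ℕ):ℝ) - (5*r)*((k' i:ℕ):ℝ))^2)
        (fun i _ => sq_nonneg _) (Finset.mem_univ i₀))
    have hfin : (5*r)^2 ≤ ‖v k - v k'‖^2 := by rw [hsq]; exact hsumge
    calc 5*r = Real.sqrt ((5*r)^2) := (Real.sqrt_sq (by positivity)).symm
      _ ≤ Real.sqrt (‖v k - v k'‖^2) := Real.sqrt_le_sqrt hfin
      _ = ‖v k - v k'‖ := Real.sqrt_sq (norm_nonneg _)
  have hvu : ∀ k, ⟪v k, u⟫ = 0 := by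
    intro k
    rw [hvdef]
    simp only [sum_inner, real_inner_smul_left]
    simp [heu]
  by_contra hcon
  push_neg at hcon
  have hchoice : ∀ k : Fin (n-1) → Fin K, ∃ γ, γ ∈ Γ ∧ ∃ t : ℝ, t ∈ Icc (0:ℝ) 1 ∧
      dist (X₁ + v k + t • u) γ < r := by
    intro k
    have hb1 : X₁ + v k ∈ ball X₁ (s/2) := by
      rw [mem_ball, dist_eq_norm]
      have h0 : X₁ + v k - X₁ = v k := by abel
      rw [h0]
      linarith [hvnorm k]
    have hb2 : X₂ + v k ∈ ball X₂ (s/2) := by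
      rw [mem_ball, dist_eq_norm]
      have h0 : X₂ + v k - X₂ = v k := by abel
      rw [h0]
      linarith [hvnorm k]
    obtain ⟨Z, hZseg, hZlt⟩ := hcon (X₁ + v k) hb1 (X₂ + v k) hb2
    rw [segment_eq_image'] at hZseg
    obtain ⟨θ, hθ, rfl⟩ := hZseg
    have harg : X₂ + v k - (X₁ + v k) = u := by rw [hudef]; abel
    rw [harg] at hZlt
    have harg2 : X₁ + v k + θ • u = X₁ + v k + θ • u := rfl
    obtain ⟨γ, hγ, hγd⟩ := (Metric.infDist_lt_iff hne).mp hZlt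
    exact ⟨γ, hγ, θ, hθ, hγd⟩
  choose γ hγΓ t htI hγd using hchoice
  have hsep : ∀ k k', k ≠ k' → 3*r ≤ dist (γ k) (γ k') := by
    intro k k' hkk
    have hAB : dist (X₁ + v k + t k • u) (X₁ + v k' + t k' • u)
        = ‖(v k - v k') + (t k - t k') • u‖ := by
      rw [dist_eq_norm]
      congr 1
      rw [sub_smul]
      abel
    have hinner : ⟪v k - v k', (t k - t k') • u⟫ = 0 := by
      rw [real_inner_smul_right, inner_sub_left, hvu, hvu]
      ring
    have hpyth : ‖(v k - v k') + (t k - t k') • u‖^2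
        = ‖v k - v k'‖^2 + ‖(t k - t k') • u‖^2 := by
      rw [norm_add_sq_real, hinner]
      ring
    have h5 : 5*r ≤ dist (X₁ + v k + t k • u) (X₁ + v k' + t k' • u) := by
      rw [hAB]
      have h1 := hvsep k k' hkk
      have h2 : ‖v k - v k'‖^2 ≤ ‖(v k - v k') + (t k - t k') • u‖^2 := by
        rw [hpyth]
        nlinarith [sq_nonneg ‖(t k - t k') • u‖]
      calc 5*r = Real.sqrt ((5*r)^2) := (Real.sqrt_sq (by positivity)).symm
        _ ≤ Real.sqrt (‖(v k - v k') + (t k - t k') • u‖^2) := by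
            apply Real.sqrt_le_sqrt
            have h3 : (5*r)^2 ≤ ‖v k - v k'‖^2 :=
              pow_le_pow_left₀ (by positivity) h1 2
            linarith
        _ = ‖(v k - v k') + (t k - t k') • u‖ := Real.sqrt_sq (norm_nonneg _)
    have htri := dist_triangle4 (X₁ + v k + t k • u) (γ k) (γ k') (X₁ + v k' + t k' • u)
    have hd1 := hγd k
    have hd2 := hγd k'
    have hd2' : dist (γ k') (X₁ + v k' + t k' • u) < r := by rw [dist_comm]; exact hd2
    linarith
  -- measure-theoretic counting
  have hcount : ((K:ℝ))^(n-1) * (Cd⁻¹ * r^d) ≤ Cd * ((5*(Λ*s)) ^ d) := by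
    set S : (Fin (n-1) → Fin K) → Set (EuclideanSpace ℝ (Fin n)) :=
      fun k => Γ ∩ ball (γ k) r with hSdef
    have hmeas : ∀ k, MeasurableSet (S k) := fun k =>
      hΓ.measurableSet.inter measurableSet_ball
    have hdisj : ((Finset.univ : Finset (Fin (n-1) → Fin K)) : Set (Fin (n-1) → Fin K)).PairwiseDisjoint S := by
      intro k _ k' _ hkk
      apply Set.disjoint_left.mpr
      rintro y ⟨-, hy⟩ ⟨-, hy'⟩
      rw [mem_ball] at hy hy'
      have h3 := hsep k k' hkk
      have h4 : dist (γ k) (γ k') ≤ dist (γ k) y + dist y (γ k') := dist_triangle _ _ _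
      rw [dist_comm (γ k) y] at h4
      linarith
    have hsub : ∀ k, S k ⊆ Γ ∩ ball x₀ (5*(Λ*s)) := by
      intro k y hy
      obtain ⟨hyΓ, hyb⟩ := hy
      refine ⟨hyΓ, ?_⟩
      rw [mem_ball] at hyb ⊢
      have h1 : dist (γ k) (X₁ + v k + t k • u) < r := by
        rw [dist_comm]; exact hγd k
      have h2 : dist (X₁ + v k + t k • u) X₁ ≤ s/4 + Λ*s := by
        rw [dist_eq_norm]
        have h0 : X₁ + v k + t k • u - X₁ = v k + t k • u := by abel
        rw [h0]
        have h3 : ‖t k • u‖ ≤ Λ * s := by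
          rw [norm_smul, Real.norm_eq_abs, abs_of_nonneg (htI k).1]
          calc t k * ‖u‖ ≤ 1 * ‖u‖ :=
                mul_le_mul_of_nonneg_right (htI k).2 (norm_nonneg _)
            _ = ‖u‖ := one_mul _
            _ ≤ Λ * s := hun
        calc ‖v k + t k • u‖ ≤ ‖v k‖ + ‖t k • u‖ := norm_add_le _ _
          _ ≤ s/4 + Λ*s := add_le_add (hvnorm k) h3
      have h5 : dist y X₁ ≤ dist y (γ k) + dist (γ k) (X₁ + v k + t k • u)
          + dist (X₁ + v k + t k • u) X₁ := dist_triangle4 _ _ _ _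
      have h6 : dist y x₀ ≤ dist y X₁ + dist X₁ x₀ := dist_triangle _ _ _
      have hrq : r ≤ s/4 := hrs4
      linarith
    have hlow : ∀ k, ENNReal.ofReal (Cd⁻¹ * r^d) ≤ μH[d] (S k) := fun k =>
      (hADR (γ k) (hγΓ k) r hr0).1
    have h5Λs : (0:ℝ) < 5*(Λ*s) := by positivity
    have hup : μH[d] (Γ ∩ ball x₀ (5*(Λ*s))) ≤ ENNReal.ofReal (Cd * (5*(Λ*s))^d) :=
      (hADR x₀ hx₀Γ _ h5Λs).2
    have hunion :
        μH[d] (⋃ k ∈ (Finset.univ : Finset (Fin (n-1) → Fin K)), S k)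
          = ∑ k : Fin (n-1) → Fin K, μH[d] (S k) :=
      measure_biUnion_finset hdisj (fun k _ => hmeas k)
    have hcardM : ((Fintype.card (Fin (n-1) → Fin K) : ENNReal)) * ENNReal.ofReal (Cd⁻¹ * r^d)
        ≤ ENNReal.ofReal (Cd * (5*(Λ*s))^d) := by
      calc ((Fintype.card (Fin (n-1) → Fin K) : ENNReal)) * ENNReal.ofReal (Cd⁻¹ * r^d)
          = ∑ _k : (Fin (n-1) → Fin K), ENNReal.ofReal (Cd⁻¹ * r^d) := by
            rw [Finset.sum_const, Finset.card_univ, nsmul_eq_mul]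
        _ ≤ ∑ k : Fin (n-1) → Fin K, μH[d] (S k) := Finset.sum_le_sum (fun k _ => hlow k)
        _ = μH[d] (⋃ k ∈ (Finset.univ : Finset (Fin (n-1) → Fin K)), S k) := hunion.symm
        _ ≤ μH[d] (Γ ∩ ball x₀ (5*(Λ*s))) := by
            apply measure_mono
            intro y hy
            rw [Set.mem_iUnion] at hy
            obtain ⟨k, hk⟩ := hy
            rw [Set.mem_iUnion] at hk
            obtain ⟨-, hk⟩ := hk
            exact hsub k hk
        _ ≤ _ := hup
    have hcard : Fintype.card (Fin (n-1) → Fin K) = K^(n-1) := by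
      rw [Fintype.card_fun]
      simp
    rw [hcard] at hcardM
    have hofk : ENNReal.ofReal ((K:ℝ)^(n-1) * (Cd⁻¹ * r^d))
        ≤ ENNReal.ofReal (Cd * (5*(Λ*s))^d) := by
      rw [ENNReal.ofReal_mul (by positivity)]
      have hh : ENNReal.ofReal ((K:ℝ)^(n-1)) = ((K^(n-1) : ℕ) : ENNReal) := by
        rw [← Nat.cast_pow, ← ENNReal.ofReal_natCast]
      rw [hh]
      exact hcardM
    have hrhs0 : (0:ℝ) ≤ Cd * (5*(Λ*s))^d := by positivity
    exact (ENNReal.ofReal_le_ofReal_iff hrhs0).mp hofk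
  -- final arithmetic contradiction
  have hT : (0:ℝ) < s / r := by positivity
  have hQ0 : (0:ℝ) < 40*(n:ℝ) := by linarith
  have hQ : (0:ℝ) < (40*(n:ℝ))^(n-1) := pow_pos hQ0 _
  have hCd0 : (0:ℝ) < Cd := lt_of_lt_of_le one_pos hCd
  have h1 : (s/(40*(n:ℝ)*r))^(n-1) * (Cd⁻¹ * r^d) ≤ Cd * ((5*(Λ*s))^d) :=
    le_trans (mul_le_mul_of_nonneg_right
      (pow_le_pow_left₀ (by positivity) hKlb _) (by positivity)) hcount
  have hrw1 : s/(40*(n:ℝ)*r) = (s/r) / (40*(n:ℝ)) := by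
    rw [div_div]
    congr 1
    ring
  have hrpd : (0:ℝ) < r ^ d := Real.rpow_pos_of_pos hr0 d
  have hTd : (0:ℝ) < (s/r) ^ d := Real.rpow_pos_of_pos hT d
  have hsd : s ^ d = (s/r)^d * r^d := by
    rw [← Real.mul_rpow (by positivity) hr0.le, div_mul_cancel₀ _ hr0.ne']
  have h5d : (5*(Λ*s))^d = (5:ℝ)^d * Λ^d * s^d := by
    rw [show (5:ℝ)*(Λ*s) = (5*Λ)*s by ring,
      Real.mul_rpow (by positivity) hs.le, Real.mul_rpow (by norm_num) hΛ0.le]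
  have hTn : (s/r)^(n-1 : ℕ) = (s/r)^β * (s/r)^d := by
    rw [← Real.rpow_natCast (s/r) (n-1), hcastn1, ← Real.rpow_add hT]
    congr 1
    rw [hβdef]
    ring
  have h2 : ((s/r)/(40*(n:ℝ)))^(n-1 : ℕ) = (s/r)^(n-1 : ℕ) / (40*(n:ℝ))^(n-1 : ℕ) :=
    div_pow _ _ _
  rw [hrw1, h2, hTn, h5d, hsd] at h1
  -- cancel the positive factor (s/r)^d * r^d
  have hP : (0:ℝ) < (s/r)^d * r^d := mul_pos hTd hrpd
  have h4 : (s/r)^β * Cd⁻¹ / (40*(n:ℝ))^(n-1) ≤ Cd * (5:ℝ)^d * Λ^d := by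
    have hL : (s/r)^β * (s/r)^d / (40*(n:ℝ))^(n-1) * (Cd⁻¹ * r^d)
        = ((s/r)^β * Cd⁻¹ / (40*(n:ℝ))^(n-1)) * ((s/r)^d * r^d) := by ring
    have hR : Cd * ((5:ℝ)^d * Λ^d * ((s/r)^d * r^d))
        = (Cd * (5:ℝ)^d * Λ^d) * ((s/r)^d * r^d) := by ring
    rw [hL, hR] at h1
    exact le_of_mul_le_mul_right h1 hP
  have h5 : (s/r)^β ≤ E0 * Λ^d := by
    have hkey : (s/r)^β = ((s/r)^β * Cd⁻¹ / (40*(n:ℝ))^(n-1)) * ((40*(n:ℝ))^(n-1) * Cd) := by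
      field_simp
      try ring
      try exact Or.inl (by ring)
    rw [hkey, hE0def]
    calc ((s/r)^β * Cd⁻¹ / (40*(n:ℝ))^(n-1)) * ((40*(n:ℝ))^(n-1) * Cd)
        ≤ (Cd * (5:ℝ)^d * Λ^d) * ((40*(n:ℝ))^(n-1) * Cd) :=
          mul_le_mul_of_nonneg_right h4 (by positivity)
      _ = (40*(n:ℝ))^(n-1) * Cd^2 * (5:ℝ)^d * Λ^d := by ring
  have hΛd : (0:ℝ) < Λ^d := Real.rpow_pos_of_pos hΛ0 d
  have hTval : s / r = cH⁻¹ * Λ ^ (d / β) := by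
    rw [hrdef, Real.rpow_neg hΛ0.le]
    field_simp
    try ring
  have h6 : (s/r)^β = (cH^β)⁻¹ * Λ^d := by
    rw [hTval, Real.mul_rpow (by positivity) (Real.rpow_nonneg hΛ0.le _),
      Real.inv_rpow hc0.le, ← Real.rpow_mul hΛ0.le, div_mul_cancel₀ d hβ.ne']
  rw [h6] at h5
  have h7 : (cH^β)⁻¹ ≤ E0 := le_of_mul_le_mul_right h5 hΛd
  have hcb : (0:ℝ) < cH^β := Real.rpow_pos_of_pos hc0 β
  have h8 : 1 ≤ E0 * cH^β := by
    have h9 := mul_le_mul_of_nonneg_right h7 hcb.le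
    rw [inv_mul_cancel₀ hcb.ne'] at h9
    linarith
  have h9 : E0 * cH^β ≤ E0 * (2*E0)⁻¹ := mul_le_mul_of_nonneg_left hcβ hE0.le
  have h10 : E0 * (2*E0)⁻¹ = 1/2 := by
    field_simp
    try ring
  linarith
end

section
/- Let Ω_𝔽 be a sawtooth domain over a d-ADR set Γ with d ∈ (0, n-1), and σ⋆ the weighted surface measure on ∂Ω_𝔽 defined by σ⋆(E) = H^d(E∩Γ) + ∫_{E\Γ} dist(X,Γ)^{d+1-n} dH^{n-1}(X). Then σ⋆ is doubling: there exists C₃ > 1 with σ⋆(B(x,2r) ∩ ∂Ω_𝔽) ≤ C₃ σ⋆(B(x,r) ∩ ∂Ω_𝔽) for every x ∈ ∂Ω_𝔽 and r > 0. -/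
open Metric MeasureTheory Set
open scoped ENNReal

private lemma ennreal_step {σ2 σ1 : ℝ≥0∞} {A B C : ℝ}
    (h1 : σ2 ≤ ENNReal.ofReal A) (h2 : ENNReal.ofReal B ≤ σ1)
    (hC : 0 ≤ C) (hAB : A ≤ C * B) : σ2 ≤ ENNReal.ofReal C * σ1 := by
  calc σ2 ≤ ENNReal.ofReal A := h1
    _ ≤ ENNReal.ofReal (C * B) := ENNReal.ofReal_le_ofReal hAB
    _ = ENNReal.ofReal C * ENNReal.ofReal B := ENNReal.ofReal_mul hC
    _ ≤ ENNReal.ofReal C * σ1 := by exact mul_le_mul_right h2 _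

set_option maxHeartbeats 1000000 in
/-- The weighted surface measure `σ⋆` on the boundary `S = ∂Ω_𝔽` of a sawtooth domain is
doubling, given the two-sided Ahlfors-type estimates (a)-(d):
`σ⋆(Δ⋆(x,2r)) ≤ C₃ σ⋆(Δ⋆(x,r))` for all `x ∈ S` and `r > 0`. -/
theorem sawtooth_surface_measure_doubling {n : ℕ} (hn : 3 ≤ n)
    (d : ℝ) (hd : 0 < d) (hdn : d < (n : ℝ) - 1)
    (Γ S : Set (EuclideanSpace ℝ (Fin n))) (hΓ : IsClosed Γ) (hΓne : Γ.Nonempty)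
    (σs : Set (EuclideanSpace ℝ (Fin n)) → ℝ≥0∞)
    (M0 V1 V2 v1 v2 : ℝ) (hM0 : 1 ≤ M0) (hV1 : 0 < V1) (hV2 : 0 < V2)
    (hv1 : 0 < v1) (hv2 : 0 < v2)
    -- (a) upper d-dimensional bound
    (ha : ∀ x ∈ S, ∀ r : ℝ, 0 < r → σs (ball x r ∩ S) ≤ ENNReal.ofReal (V1 * r ^ d))
    -- (b) upper (n-1)-dimensional bound away from Γ
    (hb : ∀ x ∈ S, ∀ r : ℝ, 0 < r → r / M0 < Metric.infDist x Γ →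
      σs (ball x r ∩ S) ≤
        ENNReal.ofReal (V2 * Metric.infDist x Γ ^ (d + 1 - (n : ℝ)) * r ^ ((n : ℝ) - 1)))
    -- (c) lower (n-1)-dimensional bound away from Γ
    (hc : ∀ x ∈ S, ∀ r : ℝ, 0 < r → r / M0 ≤ Metric.infDist x Γ →
      ENNReal.ofReal (v1 * Metric.infDist x Γ ^ (d + 1 - (n : ℝ)) * r ^ ((n : ℝ) - 1)) ≤
        σs (ball x r ∩ S))
    -- (d) lower d-dimensional bound near Γ
    (hd' : ∀ x ∈ S, ∀ r : ℝ, 0 < r → Metric.infDist x Γ < r / M0 →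
      ENNReal.ofReal (v2 * r ^ d) ≤ σs (ball x r ∩ S)) :
    ∃ C3 : ℝ, 1 < C3 ∧ ∀ x ∈ S, ∀ r : ℝ, 0 < r →
      σs (ball x (2 * r) ∩ S) ≤ ENNReal.ofReal C3 * σs (ball x r ∩ S) := by
  have h2d : (0:ℝ) < (2:ℝ) ^ d := Real.rpow_pos_of_pos two_pos d
  have h2n : (0:ℝ) < (2:ℝ) ^ ((n:ℝ) - 1) := Real.rpow_pos_of_pos two_pos _
  set K1 : ℝ := V1 * (2:ℝ) ^ d / v2 with hK1
  set K2 : ℝ := V2 * (2:ℝ) ^ ((n:ℝ) - 1) / v1 with hK2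
  set K3 : ℝ := V1 * (2:ℝ) ^ ((n:ℝ) - 1) / v1 with hK3
  have hK1p : 0 < K1 := by positivity
  have hK2p : 0 < K2 := by positivity
  have hK3p : 0 < K3 := by positivity
  refine ⟨1 + K1 + K2 + K3, by linarith, ?_⟩
  have hCpos : (0:ℝ) < 1 + K1 + K2 + K3 := by linarith
  intro x hx r hr
  have hM0' : (0:ℝ) < M0 := lt_of_lt_of_le one_pos hM0
  have h2r : (0:ℝ) < 2 * r := by linarith
  set δ := Metric.infDist x Γ with hδ
  have hrd : (0:ℝ) < r ^ d := Real.rpow_pos_of_pos hr d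
  have hrn : (0:ℝ) < r ^ ((n:ℝ) - 1) := Real.rpow_pos_of_pos hr _
  have h2rd : (2 * r) ^ d = (2:ℝ) ^ d * r ^ d :=
    Real.mul_rpow (by norm_num) hr.le
  have h2rn : (2 * r) ^ ((n:ℝ) - 1) = (2:ℝ) ^ ((n:ℝ) - 1) * r ^ ((n:ℝ) - 1) :=
    Real.mul_rpow (by norm_num) hr.le
  by_cases hcase : δ < r / M0
  · -- near Γ: (a) at 2r, (d) at r
    refine ennreal_step (ha x hx (2 * r) h2r) (hd' x hx r hr hcase) hCpos.le ?_
    have : V1 * (2 * r) ^ d = K1 * (v2 * r ^ d) := by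
      rw [h2rd, hK1]; field_simp
    rw [this]
    have hB : (0:ℝ) < v2 * r ^ d := by positivity
    nlinarith [mul_pos hK2p hB, mul_pos hK3p hB]
  · push_neg at hcase
    have hδpos : (0:ℝ) < δ := lt_of_lt_of_le (div_pos hr hM0') hcase
    have hδe : (0:ℝ) < δ ^ (d + 1 - (n:ℝ)) := Real.rpow_pos_of_pos hδpos _
    by_cases hcase2 : 2 * r / M0 < δ
    · -- far from Γ at both scales: (b) at 2r, (c) at r
      refine ennreal_step (hb x hx (2 * r) h2r hcase2) (hc x hx r hr hcase) hCpos.le ?_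
      have : V2 * δ ^ (d + 1 - (n:ℝ)) * (2 * r) ^ ((n:ℝ) - 1)
          = K2 * (v1 * δ ^ (d + 1 - (n:ℝ)) * r ^ ((n:ℝ) - 1)) := by
        rw [h2rn, hK2]; field_simp
      rw [this]
      have hB : (0:ℝ) < v1 * δ ^ (d + 1 - (n:ℝ)) * r ^ ((n:ℝ) - 1) := by positivity
      nlinarith [mul_pos hK1p hB, mul_pos hK3p hB]
    · -- intermediate: (a) at 2r, (c) at r
      push_neg at hcase2
      refine ennreal_step (ha x hx (2 * r) h2r) (hc x hx r hr hcase) hCpos.le ?_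
      -- lower bound for B:  v1 * δ^e * r^(n-1) ≥ v1 * 2^e * r^d  (using δ ≤ 2r/M0, M0 ≥ 1)
      have he : d + 1 - (n:ℝ) ≤ 0 := by linarith
      have hmono : ((2 * r) / M0) ^ (d + 1 - (n:ℝ)) ≤ δ ^ (d + 1 - (n:ℝ)) := by
        exact Real.rpow_le_rpow_of_nonpos hδpos hcase2 he
      have hstep : (2:ℝ) ^ (d + 1 - (n:ℝ)) * r ^ (d + 1 - (n:ℝ))
          ≤ ((2 * r) / M0) ^ (d + 1 - (n:ℝ)) := by
        have h1 : ((2 * r) / M0) ^ (d + 1 - (n:ℝ))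
            = (2 * r) ^ (d + 1 - (n:ℝ)) * (M0 ^ (d + 1 - (n:ℝ)))⁻¹ := by
          rw [Real.div_rpow h2r.le hM0'.le, div_eq_mul_inv]
        have h2 : (2 * r) ^ (d + 1 - (n:ℝ)) = (2:ℝ) ^ (d + 1 - (n:ℝ)) * r ^ (d + 1 - (n:ℝ)) :=
          Real.mul_rpow (by norm_num) hr.le
        have h3 : M0 ^ (d + 1 - (n:ℝ)) ≤ 1 := by
          calc M0 ^ (d + 1 - (n:ℝ)) ≤ (1:ℝ) ^ (d + 1 - (n:ℝ)) :=
                Real.rpow_le_rpow_of_nonpos one_pos hM0 he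
            _ = 1 := Real.one_rpow _
        have h4 : (1:ℝ) ≤ (M0 ^ (d + 1 - (n:ℝ)))⁻¹ :=
          (one_le_inv₀ (Real.rpow_pos_of_pos hM0' _)).2 h3
        rw [h1, h2]
        nlinarith [Real.rpow_pos_of_pos two_pos (d + 1 - (n:ℝ)),
          Real.rpow_pos_of_pos hr (d + 1 - (n:ℝ)),
          mul_pos (Real.rpow_pos_of_pos two_pos (d + 1 - (n:ℝ)))
            (Real.rpow_pos_of_pos hr (d + 1 - (n:ℝ)))]
      have hlow : v1 * ((2:ℝ) ^ (d + 1 - (n:ℝ)) * r ^ d)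
          ≤ v1 * δ ^ (d + 1 - (n:ℝ)) * r ^ ((n:ℝ) - 1) := by
        have hrcomb : r ^ (d + 1 - (n:ℝ)) * r ^ ((n:ℝ) - 1) = r ^ d := by
          rw [← Real.rpow_add hr]; ring_nf
        have := mul_le_mul_of_nonneg_right (hstep.trans hmono) hrn.le
        calc v1 * ((2:ℝ) ^ (d + 1 - (n:ℝ)) * r ^ d)
            = v1 * ((2:ℝ) ^ (d + 1 - (n:ℝ)) * r ^ (d + 1 - (n:ℝ)) * r ^ ((n:ℝ) - 1)) := by
              rw [mul_assoc ((2:ℝ) ^ (d + 1 - (n:ℝ))), hrcomb]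
          _ ≤ v1 * (δ ^ (d + 1 - (n:ℝ)) * r ^ ((n:ℝ) - 1)) :=
              mul_le_mul_of_nonneg_left this hv1.le
          _ = v1 * δ ^ (d + 1 - (n:ℝ)) * r ^ ((n:ℝ) - 1) := by ring
      -- need: V1 * (2r)^d ≤ C3 * (v1 * δ^e * r^(n-1))
      have hkey : V1 * (2 * r) ^ d ≤ K3 * (v1 * ((2:ℝ) ^ (d + 1 - (n:ℝ)) * r ^ d)) := by
        have h2split : (2:ℝ) ^ ((n:ℝ) - 1) * (2:ℝ) ^ (d + 1 - (n:ℝ)) = (2:ℝ) ^ d := by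
          rw [← Real.rpow_add two_pos]; ring_nf
        have hKv : K3 * v1 = V1 * (2:ℝ) ^ ((n:ℝ) - 1) := by
          rw [hK3]; field_simp
        calc V1 * (2 * r) ^ d = V1 * ((2:ℝ) ^ d * r ^ d) := by rw [h2rd]
          _ = (V1 * (2:ℝ) ^ ((n:ℝ) - 1)) * ((2:ℝ) ^ (d + 1 - (n:ℝ)) * r ^ d) := by
              rw [← h2split]; ring
          _ ≤ K3 * (v1 * ((2:ℝ) ^ (d + 1 - (n:ℝ)) * r ^ d)) := le_of_eq (by rw [← hKv]; ring)
      have hB : (0:ℝ) < v1 * δ ^ (d + 1 - (n:ℝ)) * r ^ ((n:ℝ) - 1) := by positivity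
      have : K3 * (v1 * ((2:ℝ) ^ (d + 1 - (n:ℝ)) * r ^ d))
          ≤ K3 * (v1 * δ ^ (d + 1 - (n:ℝ)) * r ^ ((n:ℝ) - 1)) := by
        have := mul_le_mul_of_nonneg_left hlow hK3p.le
        linarith [this]
      nlinarith [hkey, this, mul_pos hK1p hB, mul_pos hK2p hB]
end

section
/- Let Γ be d-ADR, Q₀ a dyadic cube, 𝔽 ⊂ Q₀ a disjoint family of dyadic cubes, and μ a dyadically doubling measure on Q₀. Then the projected measure 𝒫_𝔽 μ, defined by 𝒫_𝔽μ(E) = μ(E \ ⋃_j Q_j) + Σ_j [σ(E∩Q_j)/σ(Q_j)] μ(Q_j), is dyadically doubling on Q₀. -/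
open Metric MeasureTheory Set
open scoped ENNReal

/-- The projection `𝒫_𝔽 μ` of a dyadically doubling measure `μ` on `Q₀` along a disjoint
family `𝔽 ⊆ 𝔻_{Q₀}` is again dyadically doubling on `Q₀`. -/
theorem projection_of_dyadically_doubling {n : ℕ}
    (Γ : Set (EuclideanSpace ℝ (Fin n))) (hΓ : IsClosed Γ) (d : ℝ) (hd : 0 < d)
    (𝔻 : Set (Set (EuclideanSpace ℝ (Fin n))))
    (child : Set (EuclideanSpace ℝ (Fin n)) → Set (EuclideanSpace ℝ (Fin n)) → Prop)
    (Q0 : Set (EuclideanSpace ℝ (Fin n))) (hQ0 : Q0 ∈ 𝔻)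
    -- structure of the dyadic grid
    (hmeas : ∀ Q ∈ 𝔻, MeasurableSet Q) (hQΓ : ∀ Q ∈ 𝔻, Q ⊆ Γ)
    (hchild : ∀ Q ∈ 𝔻, ∀ Q', child Q' Q → Q' ∈ 𝔻 ∧ Q' ⊆ Q)
    (hpart : ∀ Q ∈ 𝔻, ∃ c : Finset (Set (EuclideanSpace ℝ (Fin n))),
      (∀ Q' ∈ c, child Q' Q) ∧
      (c : Set (Set (EuclideanSpace ℝ (Fin n)))).PairwiseDisjoint id ∧
      ⋃₀ (c : Set (Set (EuclideanSpace ℝ (Fin n)))) = Q)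
    (N : ℕ) (hN : ∀ Q ∈ 𝔻, ∀ c : Finset (Set (EuclideanSpace ℝ (Fin n))),
      (∀ Q' ∈ c, child Q' Q) → c.card ≤ N)
    (hnest : ∀ Q ∈ 𝔻, ∀ Q' ∈ 𝔻, (Q ∩ Q').Nonempty → Q ⊆ Q' ∨ Q' ⊆ Q)
    -- σ = H^d|_Γ is comparable between a cube and each of its children
    (Cσ : ℝ) (hCσ : 0 < Cσ)
    (hσpos : ∀ Q ∈ 𝔻, 0 < μH[d] Q ∧ μH[d] Q < ⊤)
    (hσcomp : ∀ Q ∈ 𝔻, ∀ Q', child Q' Q → μH[d] Q ≤ ENNReal.ofReal Cσ * μH[d] Q')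
    -- 𝔽 = {Q_j} is a disjoint family of dyadic cubes inside Q₀
    (ι : Type*) [Countable ι] (Qf : ι → Set (EuclideanSpace ℝ (Fin n)))
    (hQf : ∀ j, Qf j ∈ 𝔻 ∧ Qf j ⊆ Q0) (hQfdisj : Pairwise (Function.onFun Disjoint Qf))
    -- μ is dyadically doubling on Q₀
    (μ : Measure (EuclideanSpace ℝ (Fin n))) (Cμ : ℝ) (hCμ : 0 < Cμ)
    (hμ : ∀ Q ∈ 𝔻, Q ⊆ Q0 → 0 < μ Q ∧ μ Q < ⊤ ∧
      ∀ Q', child Q' Q → μ Q ≤ ENNReal.ofReal Cμ * μ Q')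
    -- νP = 𝒫_𝔽 μ is the projected measure
    (νP : Set (EuclideanSpace ℝ (Fin n)) → ℝ≥0∞)
    (hνP : ∀ A : Set (EuclideanSpace ℝ (Fin n)), νP A = μ (A \ ⋃ j, Qf j) +
      ∑' j, (μH[d] (A ∩ Qf j) / μH[d] (Qf j)) * μ (Qf j)) :
    ∃ C' : ℝ, 0 < C' ∧ ∀ Q ∈ 𝔻, Q ⊆ Q0 →
      0 < νP Q ∧ νP Q < ⊤ ∧ ∀ Q', child Q' Q → νP Q ≤ ENNReal.ofReal C' * νP Q' := by

  refine ⟨(1 + Cσ) * (1 + Cμ), by positivity, ?_⟩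
  have hUmeas : MeasurableSet (⋃ j, Qf j) := MeasurableSet.iUnion fun j => hmeas _ (hQf j).1
  -- Lemma 1: if Q ⊆ Qf j₀, then νP Q = σ(Q)/σ(Qf j₀) * μ (Qf j₀)
  have lem1 : ∀ Q ∈ 𝔻, ∀ j₀ : ι, Q ⊆ Qf j₀ →
      νP Q = μH[d] Q / μH[d] (Qf j₀) * μ (Qf j₀) := by
    intro Q hQ j₀ hsub
    rw [hνP]
    have h1 : Q \ ⋃ j, Qf j = ∅ :=
      diff_eq_empty.mpr (hsub.trans (subset_iUnion Qf j₀))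
    rw [h1, measure_empty, zero_add]
    rw [tsum_eq_single j₀ ?_]
    · rw [inter_eq_left.mpr hsub]
    · intro j hj
      have he : Q ∩ Qf j = ∅ := by
        apply eq_empty_of_subset_empty
        calc Q ∩ Qf j ⊆ Qf j₀ ∩ Qf j := inter_subset_inter_left _ hsub
          _ = ∅ := ((hQfdisj hj).symm).inter_eq
      rw [he, measure_empty, ENNReal.zero_div, zero_mul]
  -- Lemma 2: if Q is not contained in any Qf j, then νP Q = μ Q
  have lem2 : ∀ Q ∈ 𝔻, (∀ j, ¬ Q ⊆ Qf j) → νP Q = μ Q := by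
    intro Q hQ hno
    rw [hνP]
    have hterm : ∀ j, μH[d] (Q ∩ Qf j) / μH[d] (Qf j) * μ (Qf j) = μ (Q ∩ Qf j) := by
      intro j
      rcases (Q ∩ Qf j).eq_empty_or_nonempty with he | hne
      · rw [he]; simp
      · have hsub : Qf j ⊆ Q :=
          (hnest Q hQ (Qf j) (hQf j).1 hne).resolve_left (hno j)
        rw [inter_eq_right.mpr hsub,
          ENNReal.div_self (hσpos _ (hQf j).1).1.ne' (hσpos _ (hQf j).1).2.ne, one_mul]
    rw [tsum_congr hterm]
    have hdisj : Pairwise (Function.onFun Disjoint fun j => Q ∩ Qf j) := fun i j hij =>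
      (hQfdisj hij).mono inter_subset_right inter_subset_right
    rw [← measure_iUnion hdisj (fun j => (hmeas Q hQ).inter (hmeas _ (hQf j).1)),
      ← inter_iUnion]
    exact measure_diff_add_inter _ hUmeas
  intro Q hQ hQsub0
  by_cases hA : ∃ j₀, Q ⊆ Qf j₀
  · obtain ⟨j₀, hj₀⟩ := hA
    have hQj := hQf j₀
    have hσQ := hσpos Q hQ
    have hσj := hσpos _ hQj.1
    have hμj := hμ _ hQj.1 hQj.2
    have hν : νP Q = μH[d] Q / μH[d] (Qf j₀) * μ (Qf j₀) := lem1 Q hQ j₀ hj₀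
    refine ⟨?_, ?_, ?_⟩
    · rw [hν]
      exact ENNReal.mul_pos (ENNReal.div_pos hσQ.1.ne' hσj.2.ne).ne' hμj.1.ne'
    · rw [hν]
      exact ENNReal.mul_lt_top (ENNReal.div_lt_top hσQ.2.ne hσj.1.ne') hμj.2.1
    · intro Q' hch
      obtain ⟨hQ'D, hQ'sub⟩ := hchild Q hQ Q' hch
      have hν' : νP Q' = μH[d] Q' / μH[d] (Qf j₀) * μ (Qf j₀) :=
        lem1 Q' hQ'D j₀ (hQ'sub.trans hj₀)
      rw [hν, hν']
      calc μH[d] Q / μH[d] (Qf j₀) * μ (Qf j₀)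
          ≤ ENNReal.ofReal Cσ * μH[d] Q' / μH[d] (Qf j₀) * μ (Qf j₀) := by
            gcongr
            exact hσcomp Q hQ Q' hch
        _ = ENNReal.ofReal Cσ * (μH[d] Q' / μH[d] (Qf j₀) * μ (Qf j₀)) := by
            rw [mul_div_assoc, mul_assoc]
        _ ≤ ENNReal.ofReal ((1 + Cσ) * (1 + Cμ)) *
              (μH[d] Q' / μH[d] (Qf j₀) * μ (Qf j₀)) := by
            gcongr
            nlinarith
  · push_neg at hA
    have hν : νP Q = μ Q := lem2 Q hQ hA
    have hμQ := hμ Q hQ hQsub0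
    refine ⟨hν ▸ hμQ.1, hν ▸ hμQ.2.1, ?_⟩
    intro Q' hch
    obtain ⟨hQ'D, hQ'sub⟩ := hchild Q hQ Q' hch
    have hμQ' := hμQ.2.2 Q' hch
    by_cases hB : ∃ j, Q' ⊆ Qf j
    · obtain ⟨j, hj⟩ := hB
      have hQ'ne : Q'.Nonempty :=
        nonempty_of_measure_ne_zero (hσpos Q' hQ'D).1.ne'
      have hcap : (Q ∩ Qf j).Nonempty :=
        ⟨hQ'ne.some, hQ'sub hQ'ne.some_mem, hj hQ'ne.some_mem⟩
      have hQfsub : Qf j ⊆ Q := (hnest Q hQ _ (hQf j).1 hcap).resolve_left (hA j)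
      have hν' : νP Q' = μH[d] Q' / μH[d] (Qf j) * μ (Qf j) := lem1 Q' hQ'D j hj
      rw [hν, hν']
      have hb := hσpos _ (hQf j).1
      have hkey : ENNReal.ofReal Cμ ≤
          ENNReal.ofReal ((1 + Cσ) * (1 + Cμ)) * (μH[d] Q' / μH[d] (Qf j)) := by
        rw [← mul_div_assoc, ENNReal.le_div_iff_mul_le (Or.inl hb.1.ne') (Or.inl hb.2.ne)]
        calc ENNReal.ofReal Cμ * μH[d] (Qf j)
            ≤ ENNReal.ofReal Cμ * μH[d] Q := by
              gcongr
          _ ≤ ENNReal.ofReal Cμ * (ENNReal.ofReal Cσ * μH[d] Q') := by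
              gcongr
              exact hσcomp Q hQ Q' hch
          _ = ENNReal.ofReal Cμ * ENNReal.ofReal Cσ * μH[d] Q' := by ring
          _ ≤ ENNReal.ofReal ((1 + Cσ) * (1 + Cμ)) * μH[d] Q' := by
              gcongr
              rw [← ENNReal.ofReal_mul hCμ.le]
              exact ENNReal.ofReal_le_ofReal (by nlinarith)
      calc μ Q ≤ ENNReal.ofReal Cμ * μ Q' := hμQ'
        _ ≤ ENNReal.ofReal Cμ * μ (Qf j) := by
            gcongr
        _ ≤ ENNReal.ofReal ((1 + Cσ) * (1 + Cμ)) * (μH[d] Q' / μH[d] (Qf j)) * μ (Qf j) :=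
            mul_le_mul_left hkey _
        _ = ENNReal.ofReal ((1 + Cσ) * (1 + Cμ)) * (μH[d] Q' / μH[d] (Qf j) * μ (Qf j)) :=
            mul_assoc _ _ _
    · push_neg at hB
      have hν' : νP Q' = μ Q' := lem2 Q' hQ'D hB
      rw [hν, hν']
      calc μ Q ≤ ENNReal.ofReal Cμ * μ Q' := hμQ'
        _ ≤ ENNReal.ofReal ((1 + Cσ) * (1 + Cμ)) * μ Q' := by
            gcongr
            nlinarith
end
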